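/- arXiv:1404.0729 — 6 statements merged into one kernel-verified Lean document; each statement's English description precedes it below -/
import Mathlib

section
/- The operation ∗ is associative: for all R-linear endomorphisms r, s, t of V one has (r ∗ s) ∗ t = r ∗ (s ∗ t). -/
/- Let `R` be a commutative ring, `V` an `R`-module and `D = ∂ : V → V` an `R`-linear map
with `∂ ∘ ∂ = 0`.  In `Module.End R V`, multiplication is composition, so `s * t = s ∘ t`. -/

variable {R : Type*} [CommRing R] {V : Type*} [AddCommGroup V] [Module R V]

/-- `s ∗ t := s + t + s∘∂∘t + s∘t∘∂`. -/
def mulStar (D s t : Module.End R V) : Module.End R V :=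
  s + t + s * D * t + s * t * D

/-- `δ(s) := ∂∘s + s∘∂ + id`. -/
def dlt (D s : Module.End R V) : Module.End R V :=
  D * s + s * D + 1

/-- the operation ∗ is associative. -/
theorem mulStar_assoc (D : Module.End R V) (hD : D * D = 0) (r s t : Module.End R V) :
    mulStar D (mulStar D r s) t = mulStar D r (mulStar D s t) := by
  noncomm_ring [mulStar, hD]
end

section
/- Existence of ∗-inverses: if s is an R-linear endomorphism of V such that δ(s) is invertible, then the endomorphism t := −s ∘ δ(s)⁻¹ satisfies s ∗ t = 0 and t ∗ s = 0. -/
/- Let `R` be a commutative ring, `V` an `R`-module and `D = ∂ : V → V` an `R`-linear map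
with `∂ ∘ ∂ = 0`.  In `Module.End R V`, multiplication is composition, so `s * t = s ∘ t`. -/

variable {R : Type*} [CommRing R] {V : Type*} [AddCommGroup V] [Module R V]

/-- existence of ∗-inverses: if δ(s) is invertible then
t := −s ∘ δ(s)⁻¹ satisfies s ∗ t = 0 and t ∗ s = 0. -/
theorem mulStar_inv (D : Module.End R V) (hD : D * D = 0) (s : Module.End R V)
    (hs : IsUnit (dlt D s)) :
    mulStar D s (-(s * Ring.inverse (dlt D s))) = 0 ∧
    mulStar D (-(s * Ring.inverse (dlt D s))) s = 0 := by
  set v := Ring.inverse (dlt D s) with hv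
  have h1 : v * (D * s + s * D + 1) = 1 := Ring.inverse_mul_cancel _ hs
  have h2 : (D * s + s * D + 1) * v = 1 := Ring.mul_inverse_cancel _ hs
  have hDw : D * (D * s + s * D + 1) = (D * s + s * D + 1) * D := by
    have h0 : D * (D * s) = 0 := by rw [← mul_assoc, hD, zero_mul]
    have h0' : s * D * D = 0 := by rw [mul_assoc, hD, mul_zero]
    rw [mul_add, mul_add, add_mul, add_mul, h0, h0', mul_one, one_mul, ← mul_assoc]
    abel
  have hc : v * D = D * v := by
    calc v * D = v * D * ((D * s + s * D + 1) * v) := by rw [h2, mul_one]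
      _ = v * (D * (D * s + s * D + 1)) * v := by noncomm_ring
      _ = v * ((D * s + s * D + 1) * D) * v := by rw [hDw]
      _ = v * (D * s + s * D + 1) * (D * v) := by noncomm_ring
      _ = D * v := by rw [h1, one_mul]
  constructor
  · show s + -(s * v) + s * D * (-(s * v)) + s * (-(s * v)) * D = 0
    have e : s * (-(s * v)) * D = -(s * (s * (D * v))) := by
      calc s * (-(s * v)) * D = -(s * (s * (v * D))) := by noncomm_ring
        _ = -(s * (s * (D * v))) := by rw [hc]
    rw [e]
    have key : s + -(s * v) + s * D * (-(s * v)) + -(s * (s * (D * v)))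
        = s - s * ((D * s + s * D + 1) * v) := by noncomm_ring
    rw [key, h2, mul_one, sub_self]
  · show -(s * v) + s + -(s * v) * D * s + -(s * v) * s * D = 0
    have key : -(s * v) + s + -(s * v) * D * s + -(s * v) * s * D
        = s - s * (v * (D * s + s * D + 1)) := by noncomm_ring
    rw [key, h1, mul_one, sub_self]
end

section
/- Normality of the subgroup of ∂-commutators: if r is an R-linear endomorphism of V with δ(r) invertible and r' := −r ∘ δ(r)⁻¹ is its ∗-inverse, then for every R-linear endomorphism x of V one has r' ∗ (∂∘x − x∘∂) ∗ r = ∂∘(x∘δ(r)) − (x∘δ(r))∘∂. -/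
/- Let `R` be a commutative ring, `V` an `R`-module and `D = ∂ : V → V` an `R`-linear map
with `∂ ∘ ∂ = 0`.  In `Module.End R V`, multiplication is composition, so `s * t = s ∘ t`. -/

variable {R : Type*} [CommRing R] {V : Type*} [AddCommGroup V] [Module R V]

/-- normality of the subgroup of ∂-commutators:
r' ∗ (∂∘x − x∘∂) ∗ r = ∂∘(x∘δ(r)) − (x∘δ(r))∘∂, where r' = −r ∘ δ(r)⁻¹. -/
theorem commutators_normal (D : Module.End R V) (hD : D * D = 0) (r : Module.End R V)
    (hr : IsUnit (dlt D r)) (x : Module.End R V) :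
    mulStar D (mulStar D (-(r * Ring.inverse (dlt D r))) (D * x - x * D)) r
      = D * (x * dlt D r) - (x * dlt D r) * D := by
  set u := dlt D r with hu_def
  set v := Ring.inverse u with hv_def
  have huv : u * v = 1 := Ring.mul_inverse_cancel _ hr
  have hvu : v * u = 1 := Ring.inverse_mul_cancel _ hr
  have hDDl : ∀ y : Module.End R V, D * (D * y) = 0 := fun y => by
    rw [← mul_assoc, hD, zero_mul]
  have hDu : D * u = u * D := by
    simp [hu_def, dlt, mul_add, add_mul, mul_assoc, hDDl, hD]
  have hDv : D * v = v * D := by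
    calc D * v = v * u * (D * v) := by rw [hvu, one_mul]
    _ = v * (D * u) * v := by rw [hDu]; noncomm_ring
    _ = v * D * (u * v) := by noncomm_ring
    _ = v * D := by rw [huv, mul_one]
  have key : r * v * u = r := by rw [mul_assoc, hvu, mul_one]
  set s := -(r * v) with hs_def
  set c := D * x - x * D with hc_def
  have h1 : mulStar D s c = s + c := by
    have e1 : s * D * c = r * (v * (D * (x * D))) := by
      rw [hs_def, hc_def]
      simp [mul_sub, sub_mul, mul_assoc, hDDl]
    have e2 : s * c * D = -(r * (v * (D * (x * D)))) := by
      rw [hs_def, hc_def]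
      simp [mul_sub, sub_mul, add_mul, neg_mul, mul_assoc, hDDl, hD]
    rw [mulStar, e1, e2]
    abel
  rw [h1]
  have h2 : mulStar D (s + c) r
      = (s + r + s * D * r + s * r * D) + (c + c * D * r + c * r * D) := by
    rw [mulStar]; noncomm_ring
  rw [h2]
  have h3 : s + r + s * D * r + s * r * D = r - r * v * u := by
    rw [hs_def, hu_def, dlt]; noncomm_ring
  have h4 : c + c * D * r + c * r * D = D * (x * u) - x * u * D := by
    rw [hc_def, hu_def, dlt]
    simp only [mul_add, add_mul, mul_sub, sub_mul, mul_one, one_mul, mul_assoc, hDDl, hD,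
      mul_zero, zero_mul]
    abel
  rw [h3, h4, key, sub_self, zero_add]
end

section
/- The bracket [s,t] := s∘∂∘t − t∘∂∘s + s∘t∘∂ − t∘s∘∂ on R-linear endomorphisms of V is alternating and satisfies the Jacobi identity: [r,[s,t]] + [s,[t,r]] + [t,[r,s]] = 0 for all R-linear endomorphisms r, s, t of V. -/
/- Let `R` be a commutative ring, `V` an `R`-module and `D = ∂ : V → V` an `R`-linear map
with `∂ ∘ ∂ = 0`.  In `Module.End R V`, multiplication is composition, so `s * t = s ∘ t`. -/

variable {R : Type*} [CommRing R] {V : Type*} [AddCommGroup V] [Module R V]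

/-- the bracket `[s,t] := s∘∂∘t − t∘∂∘s + s∘t∘∂ − t∘s∘∂`. -/
def br (D s t : Module.End R V) : Module.End R V :=
  s * D * t - t * D * s + s * t * D - t * s * D

/-- `δ'(s) := ∂∘s + s∘∂`. -/
def dlt' (D s : Module.End R V) : Module.End R V :=
  D * s + s * D

/-- the action `φ ▷ s := φ∘s − s∘φ`. -/
def act (φ s : Module.End R V) : Module.End R V :=
  φ * s - s * φ

/-- the bracket is alternating and satisfies the Jacobi identity. -/
theorem br_lie (D : Module.End R V) (hD : D * D = 0) :
    (∀ s : Module.End R V, br D s s = 0) ∧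
    (∀ r s t : Module.End R V,
      br D r (br D s t) + br D s (br D t r) + br D t (br D r s) = 0) := by
  have h : ∀ x : Module.End R V, D * (D * x) = 0 := fun x => by
    rw [← mul_assoc, hD, zero_mul]
  constructor
  · intro s
    simp only [br]
    abel
  · intro r s t
    simp only [br, mul_sub, sub_mul, mul_add, add_mul, mul_assoc, h, hD,
      mul_zero, zero_mul, sub_zero, zero_sub, add_zero, zero_add]
    abel
end

section
/- Exponential formula for GL⁻¹(V): let V be a finite-dimensional real normed vector space and ∂, A continuous linear endomorphisms of V with ∂ ∘ ∂ = 0. Then the series E(A) := Σ_{i,j ≥ 0} (1/(i+j+1)!) (A∘∂)^i ∘ A ∘ (A∘∂)^j converges absolutely, and δ(E(A)) = exp(∂∘A + A∘∂), where δ(s) := ∂∘s + s∘∂ + id and exp is the exponential of a continuous linear endomorphism. In particular δ(E(A)) is invertible, so E(A) lies in the group { s | δ(s) invertible }. -/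
open NormedSpace

set_option maxHeartbeats 1000000
set_option synthInstance.maxHeartbeats 1000000

private lemma tsum_nat_prod_eq_antidiag {M : Type*} [NormedAddCommGroup M] [CompleteSpace M]
    (f : ℕ × ℕ → M) (hf : Summable f) :
    ∑' p : ℕ × ℕ, f p = ∑' n : ℕ, ∑ kl ∈ Finset.HasAntidiagonal.antidiagonal n, f kl :=
  calc ∑' p : ℕ × ℕ, f p
      = ∑' x : Σ n : ℕ, Finset.HasAntidiagonal.antidiagonal n,
          f (Finset.HasAntidiagonal.sigmaAntidiagonalEquivProd x) :=
        (Finset.HasAntidiagonal.sigmaAntidiagonalEquivProd.tsum_eq f).symm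
    _ = ∑' (n : ℕ) (c : Finset.HasAntidiagonal.antidiagonal n),
          f (Finset.HasAntidiagonal.sigmaAntidiagonalEquivProd ⟨n, c⟩) :=
        Summable.tsum_sigma' (fun n => (hasSum_fintype _).summable)
          (Finset.HasAntidiagonal.sigmaAntidiagonalEquivProd.summable_iff.mpr hf)
    _ = ∑' n : ℕ, ∑ kl ∈ Finset.HasAntidiagonal.antidiagonal n, f kl :=
        tsum_congr fun n => Finset.tsum_subtype _ _

private lemma summable_antidiag {M : Type*} [NormedAddCommGroup M] [CompleteSpace M]
    (f : ℕ × ℕ → M) (hf : Summable f) :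
    Summable (fun n : ℕ => ∑ kl ∈ Finset.HasAntidiagonal.antidiagonal n, f kl) := by
  have h : Summable (fun x : Σ n : ℕ, Finset.HasAntidiagonal.antidiagonal n => f x.2) :=
    Finset.HasAntidiagonal.sigmaAntidiagonalEquivProd.summable_iff.mpr hf
  have := h.sigma' (fun n => (hasSum_fintype _).summable)
  exact this.congr fun n => Finset.tsum_subtype _ _

/-- exponential formula for GL⁻¹(V).  For a finite-dimensional real normed
vector space `V` and continuous linear endomorphisms `D = ∂`, `A` with `∂ ∘ ∂ = 0`, the
series `E(A) := Σ_{i,j ≥ 0} (1/(i+j+1)!) (A∘∂)^i ∘ A ∘ (A∘∂)^j` converges absolutely and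
`δ(E(A)) = exp(∂∘A + A∘∂)` where `δ(s) := ∂∘s + s∘∂ + id`; in particular `δ(E(A))` is
invertible, so `E(A)` lies in the group `{ s | δ(s) invertible }`. -/
theorem exp_formula {V : Type*} [NormedAddCommGroup V] [NormedSpace ℝ V]
    [FiniteDimensional ℝ V] (D A : V →L[ℝ] V) (hD : D * D = 0) :
    Summable (fun p : ℕ × ℕ =>
      ‖(((p.1 + p.2 + 1).factorial : ℝ))⁻¹ • ((A * D) ^ p.1 * A * (A * D) ^ p.2)‖) ∧
    D * (∑' p : ℕ × ℕ,
          (((p.1 + p.2 + 1).factorial : ℝ))⁻¹ • ((A * D) ^ p.1 * A * (A * D) ^ p.2))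
      + (∑' p : ℕ × ℕ,
          (((p.1 + p.2 + 1).factorial : ℝ))⁻¹ • ((A * D) ^ p.1 * A * (A * D) ^ p.2)) * D
      + 1
      = NormedSpace.exp (D * A + A * D) ∧
    IsUnit
      (D * (∑' p : ℕ × ℕ,
          (((p.1 + p.2 + 1).factorial : ℝ))⁻¹ • ((A * D) ^ p.1 * A * (A * D) ^ p.2))
      + (∑' p : ℕ × ℕ,
          (((p.1 + p.2 + 1).factorial : ℝ))⁻¹ • ((A * D) ^ p.1 * A * (A * D) ^ p.2)) * D
      + 1) := by
  haveI : CompleteSpace V := FiniteDimensional.complete ℝ V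
  set B := D * A with hB
  set C := A * D with hC
  set f : ℕ × ℕ → (V →L[ℝ] V) :=
    fun p => (((p.1 + p.2 + 1).factorial : ℝ))⁻¹ • ((A * D) ^ p.1 * A * (A * D) ^ p.2)
    with hfdef
  -- basic ring identities
  have hCD : C * D = 0 := by rw [hC, mul_assoc, hD, mul_zero]
  have hCB : C * B = 0 := by
    rw [hC, hB]
    calc A * D * (D * A) = A * (D * D) * A := by noncomm_ring
    _ = 0 := by rw [hD]; simp
  have hDC : ∀ i : ℕ, D * C ^ i = B ^ i * D := by
    intro i
    induction i with
    | zero => simp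
    | succ i ih =>
      rw [pow_succ, ← mul_assoc, ih, mul_assoc, hC, ← mul_assoc D A D, ← hB,
        ← mul_assoc, ← pow_succ]
  have hBpow : ∀ i j : ℕ, D * (C ^ i * A * C ^ j) = B ^ (i + 1) * C ^ j := by
    intro i j
    calc D * (C ^ i * A * C ^ j) = (D * C ^ i) * A * C ^ j := by noncomm_ring
    _ = B ^ i * D * A * C ^ j := by rw [hDC]
    _ = B ^ (i + 1) * C ^ j := by rw [mul_assoc (B ^ i), ← hB, ← pow_succ]
  have hCBj : ∀ i : ℕ, (C ^ i * A) * D = C ^ (i + 1) := by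
    intro i
    rw [mul_assoc, ← hC, ← pow_succ]
  have hCpowD : ∀ j : ℕ, C ^ (j + 1) * D = 0 := by
    intro j
    rw [pow_succ, mul_assoc, hCD, mul_zero]
  -- norm bound on powers
  have hnp : ∀ (T : V →L[ℝ] V) (n : ℕ), ‖T ^ n‖ ≤ ‖T‖ ^ n := by
    intro T n
    induction n with
    | zero =>
      simp only [pow_zero]
      exact ContinuousLinearMap.norm_id_le
    | succ n ih =>
      rw [pow_succ, pow_succ]
      calc ‖T ^ n * T‖ ≤ ‖T ^ n‖ * ‖T‖ := norm_mul_le _ _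
      _ ≤ ‖T‖ ^ n * ‖T‖ := mul_le_mul_of_nonneg_right ih (norm_nonneg T)
  -- summability of the norms
  have hbound : ∀ p : ℕ × ℕ,
      ‖f p‖ ≤ (‖C‖ ^ p.1 / p.1.factorial) * (‖A‖ * (‖C‖ ^ p.2 / p.2.factorial)) := by
    intro ⟨i, j⟩
    have hfact : ((i.factorial * j.factorial : ℕ) : ℝ) ≤ ((i + j + 1).factorial : ℝ) := by
      exact_mod_cast Nat.le_of_dvd (Nat.factorial_pos _)
        ((Nat.factorial_mul_factorial_dvd_factorial_add i j).trans
          (Nat.factorial_dvd_factorial (Nat.le_succ _)))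
    have h1 : ‖C ^ i * A * C ^ j‖ ≤ ‖C‖ ^ i * ‖A‖ * ‖C‖ ^ j := by
      have t1 : ‖C ^ i * A‖ ≤ ‖C‖ ^ i * ‖A‖ :=
        (norm_mul_le _ _).trans (mul_le_mul_of_nonneg_right (hnp C i) (norm_nonneg A))
      exact (norm_mul_le _ _).trans
        (mul_le_mul t1 (hnp C j) (norm_nonneg _) (by positivity))
    have hpos : (0 : ℝ) < ((i.factorial * j.factorial : ℕ) : ℝ) := by positivity
    have h2 : (((i + j + 1).factorial : ℝ))⁻¹ ≤ ((i.factorial * j.factorial : ℕ) : ℝ)⁻¹ :=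
      inv_anti₀ hpos hfact
    show ‖(((i + j + 1).factorial : ℝ))⁻¹ • (C ^ i * A * C ^ j)‖ ≤
      ‖C‖ ^ i / (i.factorial : ℝ) * (‖A‖ * (‖C‖ ^ j / (j.factorial : ℝ)))
    calc ‖(((i + j + 1).factorial : ℝ))⁻¹ • (C ^ i * A * C ^ j)‖
        = ‖(((i + j + 1).factorial : ℝ))⁻¹‖ * ‖C ^ i * A * C ^ j‖ :=
          norm_smul ((((i + j + 1).factorial : ℝ))⁻¹) (C ^ i * A * C ^ j)
    _ = (((i + j + 1).factorial : ℝ))⁻¹ * ‖C ^ i * A * C ^ j‖ := by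
          rw [Real.norm_eq_abs, abs_of_nonneg (by positivity)]
    _ ≤ ((i.factorial * j.factorial : ℕ) : ℝ)⁻¹ * (‖C‖ ^ i * ‖A‖ * ‖C‖ ^ j) := by
          apply mul_le_mul h2 h1 (norm_nonneg _); positivity
    _ = (‖C‖ ^ i / i.factorial) * (‖A‖ * (‖C‖ ^ j / j.factorial)) := by
          have hi : (i.factorial : ℝ) ≠ 0 := Nat.cast_ne_zero.mpr i.factorial_ne_zero
          push_cast
          field_simp
  have hgsum : Summable (fun p : ℕ × ℕ =>
      (‖C‖ ^ p.1 / p.1.factorial) * (‖A‖ * (‖C‖ ^ p.2 / p.2.factorial))) := by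
    apply Summable.mul_of_nonneg (Real.summable_pow_div_factorial ‖C‖)
      ((Real.summable_pow_div_factorial ‖C‖).mul_left ‖A‖)
    · intro n; positivity
    · intro n; positivity
  have hS : Summable (fun p : ℕ × ℕ => ‖f p‖) :=
    Summable.of_nonneg_of_le (fun _ => norm_nonneg _) hbound hgsum
  have hf : Summable f := hS.of_norm
  -- the two one-sided products, termwise
  have hDf : ∀ p : ℕ × ℕ, D * f p =
      (((p.1 + p.2 + 1).factorial : ℝ))⁻¹ • (B ^ (p.1 + 1) * C ^ p.2) := by
    intro p
    rw [hfdef]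
    show D * (_ • (C ^ p.1 * A * C ^ p.2)) = _
    rw [mul_smul_comm, hBpow]
  have hfD : (fun p : ℕ × ℕ => f p * D) =
      fun p => if p.2 = 0 then (((p.1 + 1).factorial : ℝ))⁻¹ • C ^ (p.1 + 1) else 0 := by
    funext ⟨i, j⟩
    show (_ • (C ^ i * A * C ^ j)) * D = _
    cases j with
    | zero => simp [smul_mul_assoc, hCBj]
    | succ j =>
      rw [smul_mul_assoc, if_neg (Nat.succ_ne_zero j), mul_assoc, hCpowD, mul_zero, smul_zero]
  have hfDsum : Summable (fun p : ℕ × ℕ => f p * D) := hf.mul_right D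
  set E := ∑' p : ℕ × ℕ, f p with hE
  have hDE : D * E = ∑' p : ℕ × ℕ,
      (((p.1 + p.2 + 1).factorial : ℝ))⁻¹ • (B ^ (p.1 + 1) * C ^ p.2) := by
    rw [hE, ← hf.tsum_mul_left D]
    exact tsum_congr hDf
  have hED : E * D = ∑' i : ℕ, (((i + 1).factorial : ℝ))⁻¹ • C ^ (i + 1) := by
    calc E * D = ∑' p : ℕ × ℕ, f p * D := (hf.tsum_mul_right D).symm
    _ = ∑' p : ℕ × ℕ,
        (if p.2 = 0 then (((p.1 + 1).factorial : ℝ))⁻¹ • C ^ (p.1 + 1) else 0) := by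
        rw [hfD]
    _ = ∑' (i : ℕ) (j : ℕ),
        (if j = 0 then (((i + 1).factorial : ℝ))⁻¹ • C ^ (i + 1) else 0) :=
        Summable.tsum_prod (hfD ▸ hfDsum)
    _ = ∑' i : ℕ, (((i + 1).factorial : ℝ))⁻¹ • C ^ (i + 1) :=
        tsum_congr fun i => tsum_ite_eq 0 _
  -- powers of B + C
  have hXpow : ∀ n : ℕ, (B + C) ^ n = ∑ k ∈ Finset.range (n + 1), B ^ k * C ^ (n - k) := by
    intro n
    induction n with
    | zero => simp
    | succ n ih =>
      rw [pow_succ', ih, add_mul, Finset.mul_sum, Finset.mul_sum]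
      have hBsum : ∀ k ∈ Finset.range (n + 1),
          B * (B ^ k * C ^ (n - k)) = B ^ (k + 1) * C ^ (n + 1 - (k + 1)) := by
        intro k _
        rw [← mul_assoc, ← pow_succ', Nat.succ_sub_succ]
      have hCsum : ∑ k ∈ Finset.range (n + 1), C * (B ^ k * C ^ (n - k)) = C ^ (n + 1) := by
        rw [Finset.sum_eq_single 0]
        · rw [pow_zero, one_mul, Nat.sub_zero, ← pow_succ']
        · intro k _ hk0
          obtain ⟨m, rfl⟩ := Nat.exists_eq_succ_of_ne_zero hk0
          rw [← mul_assoc, pow_succ', ← mul_assoc, hCB, zero_mul, zero_mul]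
        · intro h; exact absurd (Finset.mem_range.mpr (Nat.succ_pos n)) h
      rw [Finset.sum_congr rfl hBsum, hCsum]
      conv_rhs => rw [Finset.sum_range_succ']
      simp
  -- exp as a series of the range sums
  have hXsummable : Summable (fun n : ℕ =>
      ((n.factorial : ℝ))⁻¹ • ∑ k ∈ Finset.range (n + 1), B ^ k * C ^ (n - k)) := by
    have h := NormedSpace.expSeries_summable' (𝕂 := ℝ) (B + C)
    refine h.congr fun n => ?_
    rw [hXpow]
  have hexp : NormedSpace.exp (B + C) = ∑' n : ℕ,
      ((n.factorial : ℝ))⁻¹ • ∑ k ∈ Finset.range (n + 1), B ^ k * C ^ (n - k) := by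
    rw [NormedSpace.exp_eq_tsum (𝕂 := ℝ)]
    exact tsum_congr fun n => by rw [hXpow]
  -- rewrite the ℕ × ℕ sum as iterated antidiagonal sums
  have hT2sum : Summable (fun p : ℕ × ℕ =>
      (((p.1 + p.2 + 1).factorial : ℝ))⁻¹ • (B ^ (p.1 + 1) * C ^ p.2)) :=
    (hf.mul_left D).congr hDf
  have hanti : ∀ n : ℕ, ∑ kl ∈ Finset.HasAntidiagonal.antidiagonal n,
      (((kl.1 + kl.2 + 1).factorial : ℝ))⁻¹ • (B ^ (kl.1 + 1) * C ^ kl.2) =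
      (((n + 1).factorial : ℝ))⁻¹ • ∑ k ∈ Finset.range (n + 1), B ^ (k + 1) * C ^ (n - k) := by
    intro n
    rw [Finset.Nat.sum_antidiagonal_eq_sum_range_succ_mk, Finset.smul_sum]
    refine Finset.sum_congr rfl fun k hk => ?_
    have hkn : k ≤ n := Nat.lt_succ_iff.mp (Finset.mem_range.mp hk)
    rw [Nat.add_sub_cancel' hkn]
  have key : ∑' p : ℕ × ℕ,
      (((p.1 + p.2 + 1).factorial : ℝ))⁻¹ • (B ^ (p.1 + 1) * C ^ p.2) =
      ∑' n : ℕ, (((n + 1).factorial : ℝ))⁻¹ •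
        ∑ k ∈ Finset.range (n + 1), B ^ (k + 1) * C ^ (n - k) := by
    rw [tsum_nat_prod_eq_antidiag _ hT2sum]
    exact tsum_congr hanti
  have hsum2 : Summable (fun n : ℕ => (((n + 1).factorial : ℝ))⁻¹ •
      ∑ k ∈ Finset.range (n + 1), B ^ (k + 1) * C ^ (n - k)) :=
    (summable_antidiag _ hT2sum).congr hanti
  have hT1sum : Summable (fun i : ℕ => (((i + 1).factorial : ℝ))⁻¹ • C ^ (i + 1)) := by
    have h1 : Summable (fun i : ℕ => f (i, 0) * D) :=
      hfDsum.comp_injective (i := fun i : ℕ => ((i, 0) : ℕ × ℕ))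
        (fun a b hab => by simpa using congrArg Prod.fst hab)
    refine h1.congr fun i => ?_
    have := congrFun hfD (i, 0)
    simpa using this
  -- main computation
  have heq : D * E + E * D + 1 = NormedSpace.exp (B + C) := by
    calc D * E + E * D + 1
        = 1 + ((∑' i : ℕ, (((i + 1).factorial : ℝ))⁻¹ • C ^ (i + 1)) +
          ∑' n : ℕ, (((n + 1).factorial : ℝ))⁻¹ •
            ∑ k ∈ Finset.range (n + 1), B ^ (k + 1) * C ^ (n - k)) := by
          rw [hDE, hED, key]; abel
      _ = NormedSpace.exp (B + C) := by
        rw [hexp, Summable.tsum_eq_zero_add hXsummable]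
        congr 1
        · simp
        rw [← Summable.tsum_add hT1sum hsum2]
        refine tsum_congr fun n => ?_
        conv_rhs => rw [Finset.sum_range_succ', smul_add]
        simp only [Nat.succ_sub_succ, Nat.sub_zero, pow_zero, one_mul]
        exact add_comm _ _
  exact ⟨hS, heq, heq ▸ NormedSpace.isUnit_exp_of_mem_ball (𝕂 := ℝ)
    ((NormedSpace.expSeries_radius_eq_top ℝ (V →L[ℝ] V)).symm ▸ edist_lt_top _ _)⟩
end

section
/- Inverse Dyson series: let E be a finite-dimensional real normed vector space and a : ℝ → L(E,E) continuous. Define g(t) := id + Σ_{n ≥ 1} (−1)^n ∫_{t ≥ t₁ ≥ ⋯ ≥ t_n ≥ 0} a(t₁)∘⋯∘a(t_n) and h(t) := id + Σ_{n ≥ 1} ∫_{0 ≤ t₁ ≤ ⋯ ≤ t_n ≤ t} a(t₁)∘⋯∘a(t_n) (both series converge absolutely). Then h is differentiable with h'(t) = h(t) ∘ a(t), h(0) = id, and for all t ∈ [0,1] one has g(t) ∘ h(t) = id = h(t) ∘ g(t); i.e. h(t) = g(t)⁻¹. -/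
open intervalIntegral MeasureTheory
open scoped Nat

/-- The iterated integral `∫_{t ≥ t₁ ≥ ⋯ ≥ t_n ≥ 0} a(t₁)∘a(t₂)∘⋯∘a(t_n) dt₁⋯dt_n` over
the `n`-simplex, defined recursively via
`T a 0 t = id` and `T a (n+1) t = ∫_0^t a(u) ∘ (T a n u) du`. -/
noncomputable def simplexIntegral {E : Type*} [NormedAddCommGroup E] [NormedSpace ℝ E] :
    (ℝ → E →L[ℝ] E) → ℕ → ℝ → E →L[ℝ] E
  | _, 0, _ => 1
  | a, n + 1, t => ∫ u in (0:ℝ)..t, a u * simplexIntegral a n u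

/-- The iterated integral `∫_{0 ≤ t₁ ≤ ⋯ ≤ t_n ≤ t} a(t₁)∘⋯∘a(t_n) dt₁⋯dt_n` over the
opposite `n`-simplex, defined recursively via
`S a 0 t = id` and `S a (n+1) t = ∫_0^t (S a n u) ∘ a(u) du`. -/
noncomputable def simplexIntegral' {E : Type*} [NormedAddCommGroup E] [NormedSpace ℝ E] :
    (ℝ → E →L[ℝ] E) → ℕ → ℝ → E →L[ℝ] E
  | _, 0, _ => 1
  | a, n + 1, t => ∫ u in (0:ℝ)..t, simplexIntegral' a n u * a u

/-- The Dyson series `g(t) := id + Σ_{n ≥ 1} (−1)^n ∫_{t ≥ t₁ ≥ ⋯ ≥ t_n ≥ 0} a(t₁)∘⋯∘a(t_n)`. -/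
noncomputable def dysonSeries {E : Type*} [NormedAddCommGroup E] [NormedSpace ℝ E]
    (a : ℝ → E →L[ℝ] E) (t : ℝ) : E →L[ℝ] E :=
  1 + ∑' n : ℕ, ((-1 : ℝ)) ^ (n + 1) • simplexIntegral a (n + 1) t

/-- The series `h(t) := id + Σ_{n ≥ 1} ∫_{0 ≤ t₁ ≤ ⋯ ≤ t_n ≤ t} a(t₁)∘⋯∘a(t_n)`. -/
noncomputable def dysonSeriesInv {E : Type*} [NormedAddCommGroup E] [NormedSpace ℝ E]
    (a : ℝ → E →L[ℝ] E) (t : ℝ) : E →L[ℝ] E :=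
  1 + ∑' n : ℕ, simplexIntegral' a (n + 1) t

section aux
open scoped Nat
variable {E : Type*} [NormedAddCommGroup E] [NormedSpace ℝ E] [CompleteSpace E]
variable (a : ℝ → E →L[ℝ] E)

lemma T_succ_eq (n : ℕ) : simplexIntegral a (n+1) =
    fun t => ∫ u in (0:ℝ)..t, a u * simplexIntegral a n u := by
  funext t; simp [simplexIntegral]

lemma S_succ_eq (n : ℕ) : simplexIntegral' a (n+1) =
    fun t => ∫ u in (0:ℝ)..t, simplexIntegral' a n u * a u := by
  funext t; simp [simplexIntegral']

lemma continuous_T (ha : Continuous a) : ∀ n, Continuous (simplexIntegral a n)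
  | 0 => continuous_const
  | n+1 => by
      have h : Continuous fun u => a u * simplexIntegral a n u := ha.mul (continuous_T ha n)
      rw [T_succ_eq]
      exact intervalIntegral.continuous_primitive
        (fun c d => (h.intervalIntegrable c d : IntervalIntegrable _ volume c d)) 0

lemma continuous_S (ha : Continuous a) : ∀ n, Continuous (simplexIntegral' a n)
  | 0 => continuous_const
  | n+1 => by
      have h : Continuous fun u => simplexIntegral' a n u * a u := (continuous_S ha n).mul ha
      rw [S_succ_eq]
      exact intervalIntegral.continuous_primitive
        (fun c d => (h.intervalIntegrable c d : IntervalIntegrable _ volume c d)) 0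

lemma hasDerivAt_T (ha : Continuous a) (n : ℕ) (t : ℝ) :
    HasDerivAt (simplexIntegral a (n+1)) (a t * simplexIntegral a n t) t := by
  have h : Continuous fun u => a u * simplexIntegral a n u := ha.mul (continuous_T a ha n)
  rw [T_succ_eq]
  exact (h.integral_hasStrictDerivAt 0 t).hasDerivAt

lemma hasDerivAt_S (ha : Continuous a) (n : ℕ) (t : ℝ) :
    HasDerivAt (simplexIntegral' a (n+1)) (simplexIntegral' a n t * a t) t := by
  have h : Continuous fun u => simplexIntegral' a n u * a u := (continuous_S a ha n).mul ha
  rw [S_succ_eq]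
  exact (h.integral_hasStrictDerivAt 0 t).hasDerivAt

lemma abs_integral_abs_pow (n : ℕ) (t : ℝ) :
    |∫ u in (0:ℝ)..t, |u| ^ n| = |t| ^ (n+1) / (n+1) := by
  rcases le_or_gt 0 t with h | h
  · have : (∫ u in (0:ℝ)..t, |u| ^ n) = ∫ u in (0:ℝ)..t, u ^ n := by
      apply intervalIntegral.integral_congr
      intro u hu
      rw [Set.uIcc_of_le h] at hu
      show |u| ^ n = u ^ n
      rw [abs_of_nonneg hu.1]
    rw [this, integral_pow]
    rw [abs_of_nonneg h, zero_pow (Nat.succ_ne_zero n), sub_zero,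
      abs_of_nonneg (by positivity)]
  · have : (∫ u in (0:ℝ)..t, |u| ^ n) = ∫ u in (0:ℝ)..t, (-u) ^ n := by
      apply intervalIntegral.integral_congr
      intro u hu
      rw [Set.uIcc_of_ge h.le] at hu
      show |u| ^ n = (-u) ^ n
      rw [abs_of_nonpos hu.2]
    rw [this]
    have h2 : (∫ u in (0:ℝ)..t, (-u) ^ n) = ∫ u in (-t)..(0:ℝ), u ^ n := by
      simpa using intervalIntegral.integral_comp_neg (a := (0:ℝ)) (b := t) (fun u => u ^ n)
    rw [h2, integral_pow, zero_pow (Nat.succ_ne_zero n), zero_sub, abs_div, abs_neg,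
      abs_pow, abs_neg]
    congr 1
    rw [abs_of_nonneg (by positivity)]


lemma norm_one_le_one : ‖(1 : E →L[ℝ] E)‖ ≤ 1 := by
  rw [ContinuousLinearMap.one_def]; exact ContinuousLinearMap.norm_id_le

lemma norm_S_le (ha : Continuous a) {M : ℝ} (hM0 : 0 ≤ M)
    (hM : ∀ u ∈ Set.Icc (-3:ℝ) 3, ‖a u‖ ≤ M) (n : ℕ) :
    ∀ t ∈ Set.Icc (-3:ℝ) 3, ‖simplexIntegral' a n t‖ ≤ M ^ n * |t| ^ n / n ! := by
  induction n with
  | zero =>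
      intro t ht
      simp only [simplexIntegral', pow_zero, Nat.factorial_zero, Nat.cast_one, mul_one, div_one]
      exact norm_one_le_one
  | succ n ih =>
      intro t ht
      have ht3 : |t| ≤ 3 := abs_le.2 ⟨ht.1, ht.2⟩
      have hsub : Set.uIoc (0:ℝ) t ⊆ Set.Icc (-3:ℝ) 3 :=
        Set.uIoc_subset_uIcc.trans (Set.uIcc_subset_Icc ⟨by norm_num, by norm_num⟩ ht)
      have hcont : Continuous fun u => simplexIntegral' a n u * a u :=
        (continuous_S a ha n).mul ha
      rw [S_succ_eq]
      have key : ‖∫ u in (0:ℝ)..t, simplexIntegral' a n u * a u‖ ≤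
          |∫ u in (0:ℝ)..t, M ^ (n+1) * |u| ^ n / n !| := by
        apply intervalIntegral.norm_integral_le_abs_of_norm_le
        · filter_upwards [ae_restrict_mem measurableSet_uIoc] with u hu
          have hu3 := hsub hu
          calc ‖simplexIntegral' a n u * a u‖
              ≤ ‖simplexIntegral' a n u‖ * ‖a u‖ := norm_mul_le _ _
            _ ≤ (M ^ n * |u| ^ n / n !) * M :=
                mul_le_mul (ih u hu3) (hM u hu3) (norm_nonneg _) (by positivity)
            _ = M ^ (n+1) * |u| ^ n / n ! := by ring
        · apply Continuous.intervalIntegrable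
          fun_prop
      refine key.trans (le_of_eq ?_)
      have heq : (∫ u in (0:ℝ)..t, M ^ (n+1) * |u| ^ n / n !) =
          (M ^ (n+1) / n !) * ∫ u in (0:ℝ)..t, |u| ^ n := by
        rw [← intervalIntegral.integral_const_mul]
        congr 1
        funext u
        ring
      rw [heq, abs_mul, abs_integral_abs_pow, abs_of_nonneg (by positivity),
        Nat.factorial_succ]
      have hn : ((n+1:ℕ) : ℝ) ≠ 0 := by positivity
      push_cast
      rw [div_mul_div_comm]
      ring

lemma norm_T_le (ha : Continuous a) {M : ℝ} (hM0 : 0 ≤ M)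
    (hM : ∀ u ∈ Set.Icc (-3:ℝ) 3, ‖a u‖ ≤ M) (n : ℕ) :
    ∀ t ∈ Set.Icc (-3:ℝ) 3, ‖simplexIntegral a n t‖ ≤ M ^ n * |t| ^ n / n ! := by
  induction n with
  | zero =>
      intro t ht
      simp only [simplexIntegral, pow_zero, Nat.factorial_zero, Nat.cast_one, mul_one, div_one]
      exact norm_one_le_one
  | succ n ih =>
      intro t ht
      have ht3 : |t| ≤ 3 := abs_le.2 ⟨ht.1, ht.2⟩
      have hsub : Set.uIoc (0:ℝ) t ⊆ Set.Icc (-3:ℝ) 3 :=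
        Set.uIoc_subset_uIcc.trans (Set.uIcc_subset_Icc ⟨by norm_num, by norm_num⟩ ht)
      have hcont : Continuous fun u => a u * simplexIntegral a n u :=
        ha.mul (continuous_T a ha n)
      rw [T_succ_eq]
      have key : ‖∫ u in (0:ℝ)..t, a u * simplexIntegral a n u‖ ≤
          |∫ u in (0:ℝ)..t, M ^ (n+1) * |u| ^ n / n !| := by
        apply intervalIntegral.norm_integral_le_abs_of_norm_le
        · filter_upwards [ae_restrict_mem measurableSet_uIoc] with u hu
          have hu3 := hsub hu
          calc ‖a u * simplexIntegral a n u‖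
              ≤ ‖a u‖ * ‖simplexIntegral a n u‖ := norm_mul_le _ _
            _ ≤ M * (M ^ n * |u| ^ n / n !) :=
                mul_le_mul (hM u hu3) (ih u hu3) (norm_nonneg _) hM0
            _ = M ^ (n+1) * |u| ^ n / n ! := by ring
        · apply Continuous.intervalIntegrable
          fun_prop
      refine key.trans (le_of_eq ?_)
      have heq : (∫ u in (0:ℝ)..t, M ^ (n+1) * |u| ^ n / n !) =
          (M ^ (n+1) / n !) * ∫ u in (0:ℝ)..t, |u| ^ n := by
        rw [← intervalIntegral.integral_const_mul]
        congr 1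
        funext u
        ring
      rw [heq, abs_mul, abs_integral_abs_pow, abs_of_nonneg (by positivity),
        Nat.factorial_succ]
      push_cast
      rw [div_mul_div_comm]
      ring

end aux

section aux2
open scoped Nat

lemma clm_mul_eq_one_comm {E : Type*} [NormedAddCommGroup E] [NormedSpace ℝ E]
    [FiniteDimensional ℝ E] {f g : E →L[ℝ] E} (hfg : f * g = 1) : g * f = 1 := by
  have h1 : ((f : E →ₗ[ℝ] E) * (g : E →ₗ[ℝ] E)) = 1 := by
    ext x
    simpa using DFunLike.congr_fun hfg x
  have h2 := mul_eq_one_comm.mp h1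
  ext x
  simpa using DFunLike.congr_fun h2 x

variable {E : Type*} [NormedAddCommGroup E] [NormedSpace ℝ E] [CompleteSpace E]
variable (a : ℝ → E →L[ℝ] E)

lemma norm_neg_one_pow_smul (n : ℕ) (f : E →L[ℝ] E) : ‖((-1:ℝ)) ^ n • f‖ = ‖f‖ := by
  have h := norm_smul ((-1:ℝ) ^ n) f
  simp only [norm_pow, norm_neg, norm_one, one_pow, one_mul] at h
  exact h

lemma norm_S_le3 (ha : Continuous a) {M : ℝ} (hM0 : 0 ≤ M)
    (hM : ∀ u ∈ Set.Icc (-3:ℝ) 3, ‖a u‖ ≤ M) (n : ℕ) {y : ℝ}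
    (hy : y ∈ Set.Icc (-3:ℝ) 3) :
    ‖simplexIntegral' a n y‖ ≤ M ^ n * 3 ^ n / n ! := by
  refine (norm_S_le a ha hM0 hM n y hy).trans ?_
  have h3 : |y| ≤ 3 := abs_le.2 ⟨hy.1, hy.2⟩
  gcongr

lemma norm_T_le3 (ha : Continuous a) {M : ℝ} (hM0 : 0 ≤ M)
    (hM : ∀ u ∈ Set.Icc (-3:ℝ) 3, ‖a u‖ ≤ M) (n : ℕ) {y : ℝ}
    (hy : y ∈ Set.Icc (-3:ℝ) 3) :
    ‖simplexIntegral a n y‖ ≤ M ^ n * 3 ^ n / n ! := by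
  refine (norm_T_le a ha hM0 hM n y hy).trans ?_
  have h3 : |y| ≤ 3 := abs_le.2 ⟨hy.1, hy.2⟩
  gcongr

lemma S_zero (n : ℕ) : simplexIntegral' a (n+1) 0 = 0 := by
  have := congrFun (S_succ_eq a n) 0
  simpa [intervalIntegral.integral_same] using this

lemma T_zero (n : ℕ) : simplexIntegral a (n+1) 0 = 0 := by
  have := congrFun (T_succ_eq a n) 0
  simpa [intervalIntegral.integral_same] using this

end aux2

set_option maxHeartbeats 2000000 in
/-- inverse Dyson series: both series converge absolutely, `h` is
differentiable with `h'(t) = h(t) ∘ a(t)`, `h(0) = id`, and `h(t)` is a two-sided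
inverse of `g(t)` for all `t ∈ [0,1]`. -/
theorem dyson_inverse {E : Type*} [NormedAddCommGroup E] [NormedSpace ℝ E]
    [FiniteDimensional ℝ E] (a : ℝ → E →L[ℝ] E) (ha : Continuous a) :
    (∀ t ∈ Set.Icc (0:ℝ) 1,
      Summable fun n : ℕ => ‖((-1 : ℝ)) ^ (n + 1) • simplexIntegral a (n + 1) t‖) ∧
    (∀ t ∈ Set.Icc (0:ℝ) 1,
      Summable fun n : ℕ => ‖simplexIntegral' a (n + 1) t‖) ∧
    dysonSeriesInv a 0 = 1 ∧
    (∀ t ∈ Set.Icc (0:ℝ) 1,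
      HasDerivAt (dysonSeriesInv a) (dysonSeriesInv a t * a t) t) ∧
    (∀ t ∈ Set.Icc (0:ℝ) 1,
      dysonSeries a t * dysonSeriesInv a t = 1 ∧
      dysonSeriesInv a t * dysonSeries a t = 1) := by
  classical
  obtain ⟨M₀, hM₀⟩ :=
    (isCompact_Icc : IsCompact (Set.Icc (-3:ℝ) 3)).exists_bound_of_continuousOn ha.continuousOn
  set M : ℝ := max M₀ 0 with hMdef
  have hM0 : (0:ℝ) ≤ M := le_max_right _ _
  have hM : ∀ u ∈ Set.Icc (-3:ℝ) 3, ‖a u‖ ≤ M :=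
    fun u hu => (hM₀ u hu).trans (le_max_left _ _)
  have hIccsub : Set.Icc (0:ℝ) 1 ⊆ Set.Icc (-3:ℝ) 3 :=
    fun y hy => ⟨by linarith [hy.1], by linarith [hy.2]⟩
  have hIoosub : Set.Ioo (-2:ℝ) 2 ⊆ Set.Icc (-3:ℝ) 3 :=
    fun y hy => ⟨by linarith [hy.1], by linarith [hy.2]⟩
  have hIccIoo : Set.Icc (0:ℝ) 1 ⊆ Set.Ioo (-2:ℝ) 2 :=
    fun y hy => ⟨by linarith [hy.1], by linarith [hy.2]⟩
  -- summable bounds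
  have hB : Summable (fun n : ℕ => M ^ n * 3 ^ n / n !) := by
    refine (Real.summable_pow_div_factorial (3*M)).congr fun n => ?_
    rw [mul_pow]; ring
  have hB' : Summable (fun n : ℕ => M ^ (n+1) * 3 ^ (n+1) / (n+1)!) :=
    (hB.comp_injective (add_left_injective 1) : _)
  have hu : Summable (fun n : ℕ => (M ^ n * 3 ^ n / n !) * M) := hB.mul_right M
  -- summability of the series of operators
  have hsumS : ∀ y ∈ Set.Icc (-3:ℝ) 3, Summable fun n : ℕ => simplexIntegral' a n y :=
    fun y hy => Summable.of_norm_bounded hB (fun n => norm_S_le3 a ha hM0 hM n hy)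
  have hsumT : ∀ y ∈ Set.Icc (-3:ℝ) 3,
      Summable fun n : ℕ => ((-1:ℝ)) ^ n • simplexIntegral a n y := by
    intro y hy
    refine Summable.of_norm_bounded hB (fun n => ?_)
    calc ‖((-1:ℝ)) ^ n • simplexIntegral a n y‖
        = ‖simplexIntegral a n y‖ := norm_neg_one_pow_smul n _
      _ ≤ M ^ n * 3 ^ n / n ! := norm_T_le3 a ha hM0 hM n hy
  -- tsum identities
  have hInvEq : ∀ y ∈ Set.Icc (-3:ℝ) 3,
      dysonSeriesInv a y = ∑' n : ℕ, simplexIntegral' a n y := by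
    intro y hy
    rw [Summable.tsum_eq_zero_add (hsumS y hy)]
    simp [dysonSeriesInv, simplexIntegral']
  have hSerEq : ∀ y ∈ Set.Icc (-3:ℝ) 3,
      dysonSeries a y = ∑' n : ℕ, ((-1:ℝ)) ^ n • simplexIntegral a n y := by
    intro y hy
    rw [Summable.tsum_eq_zero_add (hsumT y hy)]
    simp [dysonSeries, simplexIntegral]
  -- values at 0
  have hInv0 : dysonSeriesInv a 0 = 1 := by
    simp [dysonSeriesInv, S_zero, tsum_zero]
  have hSer0 : dysonSeries a 0 = 1 := by
    simp [dysonSeries, T_zero, tsum_zero]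
  -- derivative of dysonSeriesInv on Ioo (-2) 2
  have hInvDeriv : ∀ y ∈ Set.Ioo (-2:ℝ) 2,
      HasDerivAt (dysonSeriesInv a) (dysonSeriesInv a y * a y) y := by
    intro y hy
    have key := hasDerivAt_tsum_of_isPreconnected hu isOpen_Ioo isPreconnected_Ioo
      (g := fun n z => simplexIntegral' a (n+1) z)
      (g' := fun n z => simplexIntegral' a n z * a z)
      (fun n z _ => hasDerivAt_S a ha n z)
      (fun n z hz => by
        refine (norm_mul_le _ _).trans ?_
        exact mul_le_mul (norm_S_le3 a ha hM0 hM n (hIoosub hz)) (hM z (hIoosub hz))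
          (norm_nonneg _) (by positivity))
      (show (0:ℝ) ∈ Set.Ioo (-2:ℝ) 2 by norm_num)
      (by simp [S_zero])
      hy
    have hd : HasDerivAt (dysonSeriesInv a)
        (∑' n : ℕ, simplexIntegral' a n y * a y) y := by
      have := key.const_add (1 : E →L[ℝ] E)
      exact this
    have : (∑' n : ℕ, simplexIntegral' a n y * a y) = dysonSeriesInv a y * a y := by
      rw [(hsumS y (hIoosub hy)).tsum_mul_right, hInvEq y (hIoosub hy)]
    rwa [this] at hd
  -- derivative of dysonSeries on Ioo (-2) 2
  have hSerDeriv : ∀ y ∈ Set.Ioo (-2:ℝ) 2,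
      HasDerivAt (dysonSeries a) (-(a y * dysonSeries a y)) y := by
    intro y hy
    have key := hasDerivAt_tsum_of_isPreconnected hu isOpen_Ioo isPreconnected_Ioo
      (g := fun n z => ((-1:ℝ)) ^ (n+1) • simplexIntegral a (n+1) z)
      (g' := fun n z => ((-1:ℝ)) ^ (n+1) • (a z * simplexIntegral a n z))
      (fun n z _ => (hasDerivAt_T a ha n z).const_smul (((-1:ℝ)) ^ (n+1)))
      (fun n z hz => by
        show ‖((-1:ℝ)) ^ (n+1) • (a z * simplexIntegral a n z)‖ ≤ M ^ n * 3 ^ n / n ! * M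
        calc ‖((-1:ℝ)) ^ (n+1) • (a z * simplexIntegral a n z)‖
            = ‖a z * simplexIntegral a n z‖ := norm_neg_one_pow_smul (n+1) _
          _ ≤ M ^ n * 3 ^ n / n ! * M := ?_
        refine (norm_mul_le _ _).trans ?_
        calc ‖a z‖ * ‖simplexIntegral a n z‖
            ≤ M * (M ^ n * 3 ^ n / n !) :=
              mul_le_mul (hM z (hIoosub hz)) (norm_T_le3 a ha hM0 hM n (hIoosub hz))
                (norm_nonneg _) hM0
          _ = (M ^ n * 3 ^ n / n !) * M := by ring)
      (show (0:ℝ) ∈ Set.Ioo (-2:ℝ) 2 by norm_num)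
      (by simp [T_zero])
      hy
    have hd : HasDerivAt (dysonSeries a)
        (∑' n : ℕ, ((-1:ℝ)) ^ (n+1) • (a y * simplexIntegral a n y)) y := by
      have := key.const_add (1 : E →L[ℝ] E)
      exact this
    have heq : (∑' n : ℕ, ((-1:ℝ)) ^ (n+1) • (a y * simplexIntegral a n y)) =
        -(a y * dysonSeries a y) := by
      have h1 : ∀ n : ℕ, ((-1:ℝ)) ^ (n+1) • (a y * simplexIntegral a n y) =
          -(a y * (((-1:ℝ)) ^ n • simplexIntegral a n y)) := by
        intro n
        rw [mul_smul_comm, pow_succ, mul_comm (((-1:ℝ)) ^ n) (-1), neg_one_mul, neg_smul]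
      rw [tsum_congr h1, tsum_neg, (hsumT y (hIoosub hy)).tsum_mul_left,
        hSerEq y (hIoosub hy)]
    rwa [heq] at hd
  -- the product h * g has zero derivative
  have hphi : ∀ y ∈ Set.Ioo (-2:ℝ) 2,
      HasDerivAt (fun z => dysonSeriesInv a z * dysonSeries a z) 0 y := by
    intro y hy
    have := (hInvDeriv y hy).mul (hSerDeriv y hy)
    have hzero : dysonSeriesInv a y * a y * dysonSeries a y +
        dysonSeriesInv a y * -(a y * dysonSeries a y) = 0 := by
      rw [mul_neg, mul_assoc]
      exact add_neg_cancel _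
    rwa [hzero] at this
  have hconst : ∀ t ∈ Set.Icc (0:ℝ) 1,
      dysonSeriesInv a t * dysonSeries a t = 1 := by
    have hc := constant_of_has_deriv_right_zero
      (f := fun z => dysonSeriesInv a z * dysonSeries a z) (a := (0:ℝ)) (b := 1)
      (fun x hx => ((hphi x (hIccIoo hx)).continuousAt).continuousWithinAt)
      (fun x hx => ((hphi x (hIccIoo (Set.Ico_subset_Icc_self hx))).hasDerivWithinAt))
    intro t ht
    have h2 := hc t ht
    rw [hInv0, hSer0, one_mul] at h2
    exact h2
  refine ⟨?_, ?_, hInv0, ?_, ?_⟩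
  · intro t ht
    refine Summable.of_nonneg_of_le (fun n => norm_nonneg _) (fun n => ?_) hB'
    calc ‖((-1:ℝ)) ^ (n+1) • simplexIntegral a (n+1) t‖
        = ‖simplexIntegral a (n+1) t‖ := norm_neg_one_pow_smul (n+1) _
      _ ≤ M ^ (n+1) * 3 ^ (n+1) / (n+1)! := norm_T_le3 a ha hM0 hM (n+1) (hIccsub ht)
  · intro t ht
    refine Summable.of_nonneg_of_le (fun n => norm_nonneg _) (fun n => ?_) hB'
    exact norm_S_le3 a ha hM0 hM (n+1) (hIccsub ht)
  · intro t ht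
    exact hInvDeriv t (hIccIoo ht)
  · intro t ht
    refine ⟨clm_mul_eq_one_comm (hconst t ht), hconst t ht⟩
end
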